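/- Let m ≥ 1 be an integer and let a, b ∈ ℝ satisfy a² + b² = 1. Then ∫₀^{π/2} (a·cos(mθ) + b·sin(mθ))² dθ ≥ (m·π − 2)/(4m), moreover (m·π − 2)/(4m) > π/12, and ∫₀^{2π} (a·cos(mθ) + b·sin(mθ))² dθ = π; consequently ∫₀^{π/2} (a·cos(mθ) + b·sin(mθ))² dθ > (1/12) ∫₀^{2π} (a·cos(mθ) + b·sin(mθ))² dθ. -/

import Mathlib

open Real

lemma key_integral (m : ℝ) (hm : 0 < m) (a b T : ℝ) :
    ∫ θ in (0 : ℝ)..T, (a * Real.cos (m * θ) + b * Real.sin (m * θ)) ^ 2 =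
      (a ^ 2 + b ^ 2) / 2 * T + (a ^ 2 - b ^ 2) / (4 * m) * Real.sin (2 * m * T)
        + a * b / (2 * m) * (1 - Real.cos (2 * m * T)) := by
  have hder : ∀ θ : ℝ, HasDerivAt
      (fun θ => (a ^ 2 + b ^ 2) / 2 * θ + (a ^ 2 - b ^ 2) / (4 * m) * Real.sin (2 * m * θ)
        - a * b / (2 * m) * Real.cos (2 * m * θ))
      ((a * Real.cos (m * θ) + b * Real.sin (m * θ)) ^ 2) θ := by
    intro θ
    have h1 : HasDerivAt (fun θ : ℝ => 2 * m * θ) (2 * m) θ := by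
      simpa using (hasDerivAt_id θ).const_mul (2 * m)
    have hsin : HasDerivAt (fun θ : ℝ => Real.sin (2 * m * θ))
        (Real.cos (2 * m * θ) * (2 * m)) θ := (Real.hasDerivAt_sin (2 * m * θ)).comp θ h1
    have hcos : HasDerivAt (fun θ : ℝ => Real.cos (2 * m * θ))
        (-Real.sin (2 * m * θ) * (2 * m)) θ := (Real.hasDerivAt_cos (2 * m * θ)).comp θ h1
    have hid : HasDerivAt (fun θ : ℝ => (a ^ 2 + b ^ 2) / 2 * θ) ((a ^ 2 + b ^ 2) / 2) θ := by
      simpa using (hasDerivAt_id θ).const_mul ((a ^ 2 + b ^ 2) / 2)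
    have := (hid.add (hsin.const_mul ((a ^ 2 - b ^ 2) / (4 * m)))).sub
      (hcos.const_mul (a * b / (2 * m)))
    refine HasDerivAt.congr_deriv this ?_
    symm
    have hs2 : Real.sin (2 * m * θ) = 2 * Real.sin (m * θ) * Real.cos (m * θ) := by
      rw [show 2 * m * θ = 2 * (m * θ) by ring, Real.sin_two_mul]
    have hc2 : Real.cos (2 * m * θ) = 2 * Real.cos (m * θ) ^ 2 - 1 := by
      rw [show 2 * m * θ = 2 * (m * θ) by ring, Real.cos_two_mul]
    have hpyth := Real.sin_sq_add_cos_sq (m * θ)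
    have e1 : (a ^ 2 - b ^ 2) / (4 * m) * (Real.cos (2 * m * θ) * (2 * m))
        = (a ^ 2 - b ^ 2) * Real.cos (2 * m * θ) / 2 := by field_simp; ring
    have e2 : a * b / (2 * m) * (-Real.sin (2 * m * θ) * (2 * m))
        = -(a * b * Real.sin (2 * m * θ)) := by field_simp
    rw [e1, e2, hs2, hc2]
    linear_combination b ^ 2 * hpyth
  have hcont : Continuous fun θ : ℝ => (a * Real.cos (m * θ) + b * Real.sin (m * θ)) ^ 2 := by
    continuity
  rw [intervalIntegral.integral_eq_sub_of_hasDerivAt (fun θ _ => hder θ)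
    (hcont.intervalIntegrable 0 T)]
  simp
  ring

/-- The inequality chain from the disc example: the quarter-arc angular integral is
bounded below by `(mπ - 2)/(4m) > π/12`, the full-circle integral equals `π`, and
consequently the quarter-arc integral exceeds one twelfth of the full one. -/
theorem stmt_2 (m : ℕ) (hm : 1 ≤ m) (a b : ℝ) (hab : a ^ 2 + b ^ 2 = 1) :
    ((m * π - 2) / (4 * m) ≤
        ∫ θ in (0 : ℝ)..(π / 2), (a * Real.cos (m * θ) + b * Real.sin (m * θ)) ^ 2) ∧
      (π / 12 < (m * π - 2) / (4 * m)) ∧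
      (∫ θ in (0 : ℝ)..(2 * π), (a * Real.cos (m * θ) + b * Real.sin (m * θ)) ^ 2 = π) ∧
      ((1 / 12) *
          ∫ θ in (0 : ℝ)..(2 * π), (a * Real.cos (m * θ) + b * Real.sin (m * θ)) ^ 2 <
        ∫ θ in (0 : ℝ)..(π / 2), (a * Real.cos (m * θ) + b * Real.sin (m * θ)) ^ 2) := by
  have hm' : (1 : ℝ) ≤ (m : ℝ) := by exact_mod_cast hm
  have hm0 : (0 : ℝ) < (m : ℝ) := by linarith
  have hpi := Real.pi_gt_three
  -- quarter integral
  have hq : ∫ θ in (0 : ℝ)..(π / 2), (a * Real.cos (m * θ) + b * Real.sin (m * θ)) ^ 2 =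
      π / 4 + a * b / (2 * m) * (1 - Real.cos (m * π)) := by
    rw [key_integral (m : ℝ) hm0 a b (π / 2)]
    have h1 : 2 * (m : ℝ) * (π / 2) = (m : ℝ) * π := by ring
    rw [h1, Real.sin_nat_mul_pi, hab]
    ring
  -- full integral
  have hf : ∫ θ in (0 : ℝ)..(2 * π), (a * Real.cos (m * θ) + b * Real.sin (m * θ)) ^ 2 = π := by
    rw [key_integral (m : ℝ) hm0 a b (2 * π)]
    have h1 : 2 * (m : ℝ) * (2 * π) = ((2 * m : ℕ) : ℝ) * (2 * π) := by push_cast; ring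
    have h2 : 2 * (m : ℝ) * (2 * π) = ((4 * m : ℕ) : ℝ) * π := by push_cast; ring
    rw [show Real.sin (2 * (m : ℝ) * (2 * π)) = 0 by rw [h2, Real.sin_nat_mul_pi],
      show Real.cos (2 * (m : ℝ) * (2 * π)) = 1 by rw [h1, Real.cos_nat_mul_two_pi], hab]
    ring
  have hcb := Real.neg_one_le_cos ((m : ℝ) * π)
  have hcb' := Real.cos_le_one ((m : ℝ) * π)
  have hab2 : -(1 / 2 : ℝ) ≤ a * b := by nlinarith [sq_nonneg (a + b)]
  have hkey : ((m : ℝ) * π - 2) / (4 * m) ≤ π / 4 + a * b / (2 * m) * (1 - Real.cos (m * π)) := by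
    rw [div_le_iff₀ (by positivity)]
    have : a * b * (1 - Real.cos ((m : ℝ) * π)) ≥ -1 := by
      nlinarith [mul_nonneg (by linarith : (0:ℝ) ≤ a * b + 1/2)
        (by linarith : (0:ℝ) ≤ 1 - Real.cos ((m : ℝ) * π))]
    have h4 : (π / 4 + a * b / (2 * m) * (1 - Real.cos (m * π))) * (4 * m)
        = (m : ℝ) * π + 2 * (a * b * (1 - Real.cos ((m : ℝ) * π))) := by
      field_simp; ring
    rw [h4]; linarith
  have h2 : π / 12 < ((m : ℝ) * π - 2) / (4 * m) := by
    rw [div_lt_div_iff₀ (by norm_num) (by positivity)]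
    nlinarith
  refine ⟨by rw [hq]; exact hkey, h2, hf, ?_⟩
  rw [hf, hq]
  linarith
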